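/- Let D₀ be the perfectly calibrated distribution with v uniform on {u_i}_{i∈[t]} ⊂ [1/3,2/3] and E[y|v]=v, and for θ ∈ {−1,1}^t let D_θ satisfy E[y | v = u_i] = u_i + θ_i α for α ∈ (0,1/3). Then the total variation distance between D₀^⊗n and the uniform mixture E_θ[D_θ^⊗n] is at most (1/2)·sqrt(exp(11 α⁴ n²/t) − 1). -/

import Mathlib

open MeasureTheory
open scoped ENNReal

noncomputable section

/-- The distribution of `(v, y) ∈ [0,1] × {0,1}` with `v` uniform over `{u i}` and
`Pr[y = 1 | v = u i] = p i`. -/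
def bernMix (t : ℕ) (u p : Fin t → ℝ) : Measure (ℝ × Bool) :=
  ENNReal.ofReal (1 / t) •
    ∑ i : Fin t,
      (ENNReal.ofReal (p i) • Measure.dirac (u i, true) +
        ENNReal.ofReal (1 - p i) • Measure.dirac (u i, false))

/-- The total variation distance between two measures. -/
def tvDist {Ω : Type*} [MeasurableSpace Ω] (μ ν : Measure Ω) : ℝ :=
  ⨆ S : {S : Set Ω // MeasurableSet S}, |(μ S.1).toReal - (ν S.1).toReal|

section Auxiliary

set_option linter.unusedSectionVars false

variable {X : Type*} [MeasurableSpace X] [MeasurableSingletonClass X] [Fintype X]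

lemma discrete_apply (w : X → ℝ) {s : Set X} (hs : MeasurableSet s) :
    (∑ x : X, ENNReal.ofReal (w x) • Measure.dirac x : Measure X) s
      = ∑ x : X, s.indicator (fun x => ENNReal.ofReal (w x)) x := by
  rw [Measure.finset_sum_apply]
  refine Finset.sum_congr rfl fun x _ => ?_
  rw [Measure.smul_apply, Measure.dirac_apply' _ hs, smul_eq_mul]
  by_cases h : x ∈ s <;>
    simp [Set.indicator_of_mem, Set.indicator_of_notMem, h]

lemma measure_eq_sum (μ : Measure X) (s : Set X) :
    μ s = ∑ x : X, s.indicator (fun x => μ {x}) x := by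
  classical
  have h1 : μ s = ∑ x ∈ (Set.toFinite s).toFinset, μ {x} := by
    conv_lhs => rw [show s = ⋃ x ∈ (Set.toFinite s).toFinset, {x} by ext z; simp only [Set.mem_iUnion, Set.Finite.mem_toFinset, Set.mem_singleton_iff, exists_prop]; exact ⟨fun h => ⟨z, h, rfl⟩, fun ⟨i, hi, hz⟩ => hz ▸ hi⟩]
    exact measure_biUnion_finset
      (fun x _ y _ hxy => by simp [Function.onFun, Set.disjoint_singleton, hxy])
      (fun _ _ => measurableSet_singleton _)
  rw [h1, ← Finset.sum_subset (Finset.subset_univ ((Set.toFinite s).toFinset))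
      (fun x _ hx => Set.indicator_of_notMem (by simpa using hx) _)]
  exact Finset.sum_congr rfl fun x hx =>
    (Set.indicator_of_mem (show x ∈ s by simpa using hx) (fun x => μ {x})).symm


lemma pi_singleton {n : ℕ} (μ : Fin n → Measure X) [∀ k, SigmaFinite (μ k)]
    (y : Fin n → X) : Measure.pi μ {y} = ∏ k, μ k {y k} := by
  rw [← Set.univ_pi_singleton y, Measure.pi_pi]


def bmW (t : ℕ) (p : Fin t → ℝ) (x : Fin t × Bool) : ℝ :=
  (1 / t) * (if x.2 then p x.1 else 1 - p x.1)

def bmD (t : ℕ) (p : Fin t → ℝ) : Measure (Fin t × Bool) :=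
  ∑ x : Fin t × Bool, ENNReal.ofReal (bmW t p x) • Measure.dirac x


lemma bernMix_eq_map (t : ℕ) (u p : Fin t → ℝ) :
    bernMix t u p = Measure.map (fun x : Fin t × Bool => (u x.1, x.2)) (bmD t p) := by
  ext s hs
  rw [Measure.map_apply (measurable_of_countable _) hs, bmD,
    discrete_apply _ ((Set.to_countable _).measurableSet)]
  simp only [bernMix, Measure.smul_apply, Measure.finset_sum_apply, Measure.coe_add,
    Pi.add_apply, Measure.smul_apply, Measure.dirac_apply' _ hs, smul_eq_mul]
  rw [Fintype.sum_prod_type]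
  rw [Finset.mul_sum]
  refine Finset.sum_congr rfl fun i _ => ?_
  have h1 : ∀ b : Bool, ((fun x : Fin t × Bool => (u x.1, x.2)) ⁻¹' s).indicator
      (fun x => ENNReal.ofReal (bmW t p x)) (i, b)
      = ENNReal.ofReal (bmW t p (i, b)) * s.indicator 1 (u i, b) := by
    intro b
    by_cases h : (u i, b) ∈ s <;>
      simp [Set.indicator_of_mem, Set.indicator_of_notMem, Set.mem_preimage, h]
  rw [Fintype.sum_bool, h1 true, h1 false]
  simp only [bmW, if_true, Bool.false_eq_true, if_false]
  rw [ENNReal.ofReal_mul (by positivity), ENNReal.ofReal_mul (by positivity)]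
  ring


lemma sum_bmW (t : ℕ) (ht : 0 < t) (p : Fin t → ℝ) :
    ∑ x : Fin t × Bool, bmW t p x = 1 := by
  have ht' : (t : ℝ) ≠ 0 := Nat.cast_ne_zero.mpr ht.ne'
  rw [Fintype.sum_prod_type]
  have h : ∀ i : Fin t, ∑ b : Bool, bmW t p (i, b) = 1 / t := by
    intro i
    rw [Fintype.sum_bool]
    simp only [bmW, if_true, Bool.false_eq_true, if_false]
    ring
  rw [Finset.sum_congr rfl fun i _ => h i, Finset.sum_const, Finset.card_univ,
    Fintype.card_fin, nsmul_eq_mul]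
  field_simp


lemma sum_ww_div (t : ℕ) (ht : 0 < t) (u : Fin t → ℝ)
    (hu0 : ∀ i, u i ≠ 0) (hu1 : ∀ i, 1 - u i ≠ 0) (α : ℝ) (a b : Fin t → ℝ) :
    ∑ x : Fin t × Bool,
        bmW t (fun i => u i + a i * α) x * bmW t (fun i => u i + b i * α) x / bmW t u x
      = 1 + α ^ 2 / t * ∑ i, a i * b i * (1 / (u i * (1 - u i))) := by
  have ht' : (t : ℝ) ≠ 0 := Nat.cast_ne_zero.mpr ht.ne'
  rw [Fintype.sum_prod_type]
  have h : ∀ i : Fin t, (∑ bb : Bool,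
      bmW t (fun i => u i + a i * α) (i, bb) * bmW t (fun i => u i + b i * α) (i, bb)
        / bmW t u (i, bb))
      = 1 / t + α ^ 2 / t * (a i * b i * (1 / (u i * (1 - u i)))) := by
    intro i
    rw [Fintype.sum_bool]
    simp only [bmW, if_true, Bool.false_eq_true, if_false]
    field_simp [hu0 i, hu1 i]
    ring
  rw [Finset.sum_congr rfl fun i _ => h i, Finset.sum_add_distrib, Finset.sum_const,
    Finset.card_univ, Fintype.card_fin, nsmul_eq_mul, ← Finset.mul_sum]
  field_simp


lemma half_l1_bound {Y : Type*} [Fintype Y] (d : Y → ℝ) (h0 : ∑ y, d y = 0) (A : Set Y) :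
    |∑ y, A.indicator d y| ≤ (1 / 2) * ∑ y, |d y| := by
  classical
  have key : ∀ e : Y → ℝ, (∑ y, e y = 0) → ∑ y, A.indicator e y ≤ (1 / 2) * ∑ y, |e y| := by
    intro e he
    calc ∑ y, A.indicator e y ≤ ∑ y, (e y + |e y|) / 2 := by
          refine Finset.sum_le_sum fun y _ => ?_
          by_cases h : y ∈ A
          · rw [Set.indicator_of_mem h]
            have := le_abs_self (e y); linarith
          · rw [Set.indicator_of_notMem h]
            have := neg_abs_le (e y); linarith
      _ = ((∑ y, e y) + ∑ y, |e y|) / 2 := by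
          rw [← Finset.sum_add_distrib, Finset.sum_div]
      _ = (1 / 2) * ∑ y, |e y| := by rw [he]; ring
  rw [abs_le]; constructor
  · have h1 := key (fun y => -d y) (by simpa using h0)
    have h2 : ∑ y, A.indicator (fun y => -d y) y = -∑ y, A.indicator d y := by
      rw [← Finset.sum_neg_distrib]
      refine Finset.sum_congr rfl fun y _ => ?_
      by_cases h : y ∈ A <;> simp [Set.indicator_of_mem, Set.indicator_of_notMem, h]
    simp only [abs_neg] at h1
    rw [h2] at h1; linarith
  · exact key d h0


lemma l1_le_sqrt_chi2 {Y : Type*} [Fintype Y] (P Q : Y → ℝ) (hP : ∀ y, 0 < P y)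
    (hP1 : ∑ y, P y = 1) (hQ1 : ∑ y, Q y = 1) {B : ℝ} (hB : ∑ y, Q y ^ 2 / P y ≤ B) :
    ∑ y, |Q y - P y| ≤ Real.sqrt (B - 1) := by
  have hCS := Finset.sum_mul_sq_le_sq_mul_sq Finset.univ (fun y => Real.sqrt (P y))
      (fun y => |Q y - P y| / Real.sqrt (P y))
  have hsq : ∀ y, Real.sqrt (P y) ≠ 0 := fun y => Real.sqrt_ne_zero'.mpr (hP y)
  have h1 : ∀ y : Y, Real.sqrt (P y) * (|Q y - P y| / Real.sqrt (P y)) = |Q y - P y| := by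
    intro y; rw [mul_comm, div_mul_cancel₀ _ (hsq y)]
  have h2 : ∀ y : Y, Real.sqrt (P y) ^ 2 = P y := fun y => Real.sq_sqrt (hP y).le
  have h3 : ∀ y : Y, (|Q y - P y| / Real.sqrt (P y)) ^ 2 = (Q y - P y) ^ 2 / P y := by
    intro y; rw [div_pow, sq_abs, h2]
  rw [Finset.sum_congr rfl fun y _ => h1 y, Finset.sum_congr rfl fun y _ => h2 y,
    Finset.sum_congr rfl fun y _ => h3 y, hP1, one_mul] at hCS
  have h4 : ∑ y, (Q y - P y) ^ 2 / P y = (∑ y, Q y ^ 2 / P y) - 1 := by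
    have : ∀ y : Y, (Q y - P y) ^ 2 / P y = Q y ^ 2 / P y - 2 * Q y + P y := by
      intro y; field_simp [(hP y).ne']; ring
    rw [Finset.sum_congr rfl fun y _ => this y, Finset.sum_add_distrib, Finset.sum_sub_distrib,
      ← Finset.mul_sum, hQ1, hP1]
    ring
  have h5 : (∑ y, |Q y - P y|) ^ 2 ≤ B - 1 := by
    rw [h4] at hCS; linarith
  have h6 := Real.sqrt_le_sqrt h5
  rwa [Real.sqrt_sq (by positivity)] at h6


lemma chi2_calc (t n : ℕ) (ht : 0 < t) (u : Fin t → ℝ)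
    (hu : ∀ i, u i ∈ Set.Icc (1 / 3 : ℝ) (2 / 3)) (α : ℝ) (hα0 : 0 < α) (hα13 : α < 1 / 3) :
    ∑ y : Fin n → Fin t × Bool,
        ((2 ^ t : ℝ)⁻¹ * ∑ θ : Fin t → Bool,
            ∏ k, bmW t (fun i => u i + (if θ i then (1 : ℝ) else -1) * α) (y k)) ^ 2
          / ∏ k, bmW t u (y k)
      ≤ Real.exp (11 * α ^ 4 * n ^ 2 / t) := by
  classical
  have ht0 : (0 : ℝ) < t := by exact_mod_cast ht
  set sg : Bool → ℝ := fun b => if b then 1 else -1 with hsg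
  set c : Fin t → ℝ := fun i => 1 / (u i * (1 - u i)) with hc
  have hu0 : ∀ i, (0 : ℝ) < u i := fun i => lt_of_lt_of_le (by norm_num) (hu i).1
  have hu1 : ∀ i, (0 : ℝ) < 1 - u i := fun i => by have := (hu i).2; linarith
  have hcpos : ∀ i, 0 < c i := fun i => by
    have := hu0 i; have := hu1 i; rw [hc]; positivity
  have hcle : ∀ i, c i ≤ 9 / 2 := by
    intro i
    rw [hc, div_le_iff₀ (by have := hu0 i; have := hu1 i; positivity)]
    nlinarith [(hu i).1, (hu i).2]
  set S : (Fin t → Bool) → (Fin t → Bool) → ℝ :=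
    fun θ θ' => ∑ i, sg (θ i) * sg (θ' i) * c i with hS
  set a : Fin t → ℝ := fun i => n * α ^ 2 * c i / t with ha
  have hsgabs : ∀ b b' : Bool, |sg b * sg b'| = 1 := by
    intro b b'; cases b <;> cases b' <;> simp [hsg]
  have hSabs : ∀ θ θ', |S θ θ'| ≤ 9 / 2 * t := by
    intro θ θ'
    calc |S θ θ'| ≤ ∑ i, |sg (θ i) * sg (θ' i) * c i| := Finset.abs_sum_le_sum_abs _ _
      _ ≤ ∑ _i : Fin t, (9 / 2 : ℝ) := by
          refine Finset.sum_le_sum fun i _ => ?_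
          rw [abs_mul, hsgabs, one_mul, abs_of_pos (hcpos i)]
          exact hcle i
      _ = 9 / 2 * t := by rw [Finset.sum_const, Finset.card_univ, Fintype.card_fin,
            nsmul_eq_mul]; ring
  -- Step A : rewrite the sum
  have hA : (∑ y : Fin n → Fin t × Bool,
        ((2 ^ t : ℝ)⁻¹ * ∑ θ : Fin t → Bool,
            ∏ k, bmW t (fun i => u i + (if θ i then (1 : ℝ) else -1) * α) (y k)) ^ 2
          / ∏ k, bmW t u (y k))
      = ((2 ^ t : ℝ)⁻¹) ^ 2 * ∑ θ : Fin t → Bool, ∑ θ' : Fin t → Bool,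
          (1 + α ^ 2 / t * S θ θ') ^ n := by
    have hw : ∀ θ : Fin t → Bool, (fun i => u i + (if θ i then (1 : ℝ) else -1) * α)
        = fun i => u i + sg (θ i) * α := by intro θ; funext i; rw [hsg]
    have h1 : ∀ y : Fin n → Fin t × Bool,
        ((2 ^ t : ℝ)⁻¹ * ∑ θ : Fin t → Bool,
            ∏ k, bmW t (fun i => u i + (if θ i then (1 : ℝ) else -1) * α) (y k)) ^ 2
          / ∏ k, bmW t u (y k)
        = ((2 ^ t : ℝ)⁻¹) ^ 2 * ∑ θ : Fin t → Bool, ∑ θ' : Fin t → Bool,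
            ∏ k, (bmW t (fun i => u i + sg (θ i) * α) (y k)
              * bmW t (fun i => u i + sg (θ' i) * α) (y k) / bmW t u (y k)) := by
      intro y
      rw [mul_pow, sq (∑ θ : Fin t → Bool, _), Finset.sum_mul_sum]
      rw [mul_div_assoc, Finset.sum_div]
      congr 1
      refine Finset.sum_congr rfl fun θ _ => ?_
      rw [Finset.sum_div]
      refine Finset.sum_congr rfl fun θ' _ => ?_
      rw [hw θ, hw θ', Finset.prod_div_distrib, Finset.prod_mul_distrib]
    rw [Finset.sum_congr rfl fun y _ => h1 y, ← Finset.mul_sum]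
    congr 1
    have h2 : ∀ θ θ' : Fin t → Bool, (∑ y : Fin n → Fin t × Bool,
        ∏ k, (bmW t (fun i => u i + sg (θ i) * α) (y k)
          * bmW t (fun i => u i + sg (θ' i) * α) (y k) / bmW t u (y k)))
        = (1 + α ^ 2 / t * S θ θ') ^ n := by
      intro θ θ'
      rw [← Fintype.sum_pow (fun x => bmW t (fun i => u i + sg (θ i) * α) x
          * bmW t (fun i => u i + sg (θ' i) * α) x / bmW t u x) n]
      rw [sum_ww_div t ht u (fun i => (hu0 i).ne') (fun i => (hu1 i).ne') α _ _]
    calc ∑ y : Fin n → Fin t × Bool, ∑ θ : Fin t → Bool, ∑ θ' : Fin t → Bool,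
          ∏ k, (bmW t (fun i => u i + sg (θ i) * α) (y k)
            * bmW t (fun i => u i + sg (θ' i) * α) (y k) / bmW t u (y k))
        = ∑ θ : Fin t → Bool, ∑ θ' : Fin t → Bool, ∑ y : Fin n → Fin t × Bool,
            ∏ k, (bmW t (fun i => u i + sg (θ i) * α) (y k)
              * bmW t (fun i => u i + sg (θ' i) * α) (y k) / bmW t u (y k)) := by
          rw [Finset.sum_comm]
          exact Finset.sum_congr rfl fun θ _ => Finset.sum_comm
      _ = ∑ θ : Fin t → Bool, ∑ θ' : Fin t → Bool, (1 + α ^ 2 / t * S θ θ') ^ n :=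
          Finset.sum_congr rfl fun θ _ => Finset.sum_congr rfl fun θ' _ => h2 θ θ'
  -- Step B : pointwise exponential bound
  have hB : ∀ θ θ' : Fin t → Bool, (1 + α ^ 2 / t * S θ θ') ^ n
      ≤ ∏ i, Real.exp (a i * (sg (θ i) * sg (θ' i))) := by
    intro θ θ'
    have habs := abs_le.mp (hSabs θ θ')
    have hq : α ^ 2 / t * (9 / 2 * t) = 9 / 2 * α ^ 2 := by field_simp
    have hs1 : -(1 : ℝ) / 2 ≤ α ^ 2 / t * S θ θ' := by
      have hpos : (0 : ℝ) ≤ α ^ 2 / t := by positivity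
      have h1 : α ^ 2 / t * S θ θ' ≥ -(α ^ 2 / t * (9 / 2 * t)) := by nlinarith [habs.1]
      nlinarith [h1, hq]
    have h0 : (0 : ℝ) ≤ 1 + α ^ 2 / t * S θ θ' := by linarith
    calc (1 + α ^ 2 / t * S θ θ') ^ n ≤ Real.exp (α ^ 2 / t * S θ θ') ^ n := by
          refine pow_le_pow_left₀ h0 ?_ n
          have := Real.add_one_le_exp (α ^ 2 / t * S θ θ'); linarith
      _ = Real.exp (n * (α ^ 2 / t * S θ θ')) := by rw [Real.exp_nat_mul]
      _ = ∏ i, Real.exp (a i * (sg (θ i) * sg (θ' i))) := by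
          rw [← Real.exp_sum]
          congr 1
          simp only [hS, ha]
          rw [Finset.mul_sum, Finset.mul_sum]
          refine Finset.sum_congr rfl fun i _ => ?_
          field_simp
  -- Step C : factorize the double sum
  have hC : (∑ θ : Fin t → Bool, ∑ θ' : Fin t → Bool,
        ∏ i, Real.exp (a i * (sg (θ i) * sg (θ' i))))
      = ∏ i, (2 * Real.exp (a i) + 2 * Real.exp (-a i)) := by
    have h1 : ∀ θ : Fin t → Bool, (∑ θ' : Fin t → Bool,
        ∏ i, Real.exp (a i * (sg (θ i) * sg (θ' i))))
        = ∏ i, ∑ b : Bool, Real.exp (a i * (sg (θ i) * sg b)) :=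
      fun θ => (Fintype.prod_sum fun i b => Real.exp (a i * (sg (θ i) * sg b))).symm
    rw [Finset.sum_congr rfl fun θ _ => h1 θ,
      ← Fintype.prod_sum fun i b => ∑ b' : Bool, Real.exp (a i * (sg b * sg b'))]
    refine Finset.prod_congr rfl fun i _ => ?_
    simp only [Fintype.sum_bool, hsg, if_true, Bool.false_eq_true, if_false,
      mul_one, one_mul, mul_neg_one, mul_neg, neg_neg, neg_mul]
    ring
  -- Step D : constant absorption
  have hD : ((2 ^ t : ℝ)⁻¹) ^ 2 * ∏ i, (2 * Real.exp (a i) + 2 * Real.exp (-a i))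
      = ∏ i, ((Real.exp (a i) + Real.exp (-a i)) / 2) := by
    have h4 : ((2 ^ t : ℝ)⁻¹) ^ 2 = ∏ _i : Fin t, (4 : ℝ)⁻¹ := by
      rw [Finset.prod_const, Finset.card_univ, Fintype.card_fin, inv_pow, ← pow_mul,
        ← inv_pow, mul_comm, pow_mul]
      norm_num
    rw [h4, ← Finset.prod_mul_distrib]
    refine Finset.prod_congr rfl fun i _ => by ring
  -- Step E : final exponential bound
  have hE : (∏ i, ((Real.exp (a i) + Real.exp (-a i)) / 2))
      ≤ Real.exp (11 * α ^ 4 * n ^ 2 / t) := by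
    calc (∏ i, ((Real.exp (a i) + Real.exp (-a i)) / 2)) = ∏ i, Real.cosh (a i) :=
          Finset.prod_congr rfl fun i _ => (Real.cosh_eq (a i)).symm
      _ ≤ ∏ i, Real.exp (a i ^ 2 / 2) :=
          Finset.prod_le_prod (fun i _ => (Real.cosh_pos (x := a i)).le)
            (fun i _ => Real.cosh_le_exp_half_sq (a i))
      _ = Real.exp (∑ i, a i ^ 2 / 2) := (Real.exp_sum _ _).symm
      _ ≤ Real.exp (11 * α ^ 4 * n ^ 2 / t) := by
          rw [Real.exp_le_exp]
          have hai : ∀ i, a i ^ 2 / 2 ≤ 81 / 8 * α ^ 4 * n ^ 2 / t ^ 2 := by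
            intro i
            have ha' : a i = (n * α ^ 2 / t) * c i := by rw [ha]; ring
            have h4 : (0 : ℝ) ≤ n * α ^ 2 / t := by positivity
            have h5 : 0 ≤ a i := by rw [ha']; exact mul_nonneg h4 (hcpos i).le
            have h6 : a i ≤ (n * α ^ 2 / t) * (9 / 2) := by
              rw [ha']; exact mul_le_mul_of_nonneg_left (hcle i) h4
            have h7 : a i ^ 2 ≤ ((n * α ^ 2 / t) * (9 / 2)) ^ 2 := pow_le_pow_left₀ h5 h6 2
            have h8 : ((n * α ^ 2 / t) * (9 / 2)) ^ 2 / 2 = 81 / 8 * α ^ 4 * n ^ 2 / t ^ 2 := by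
              ring
            linarith
          calc ∑ i, a i ^ 2 / 2 ≤ ∑ _i : Fin t, 81 / 8 * α ^ 4 * n ^ 2 / t ^ 2 :=
                Finset.sum_le_sum fun i _ => hai i
            _ = t * (81 / 8 * α ^ 4 * n ^ 2 / t ^ 2) := by
                rw [Finset.sum_const, Finset.card_univ, Fintype.card_fin, nsmul_eq_mul]
            _ = 81 / 8 * α ^ 4 * n ^ 2 / t := by field_simp
            _ ≤ 11 * α ^ 4 * n ^ 2 / t := by
                rw [div_le_div_iff₀ ht0 ht0]
                nlinarith [mul_nonneg (mul_nonneg (pow_nonneg hα0.le 4)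
                  (sq_nonneg (n : ℝ))) ht0.le]
  rw [hA]
  calc ((2 ^ t : ℝ)⁻¹) ^ 2 * ∑ θ : Fin t → Bool, ∑ θ' : Fin t → Bool,
        (1 + α ^ 2 / t * S θ θ') ^ n
      ≤ ((2 ^ t : ℝ)⁻¹) ^ 2 * ∑ θ : Fin t → Bool, ∑ θ' : Fin t → Bool,
          ∏ i, Real.exp (a i * (sg (θ i) * sg (θ' i))) := by
        refine mul_le_mul_of_nonneg_left ?_ (by positivity)
        exact Finset.sum_le_sum fun θ _ => Finset.sum_le_sum fun θ' _ => hB θ θ'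
    _ = ((2 ^ t : ℝ)⁻¹) ^ 2 * ∏ i, (2 * Real.exp (a i) + 2 * Real.exp (-a i)) := by rw [hC]
    _ = ∏ i, ((Real.exp (a i) + Real.exp (-a i)) / 2) := hD
    _ ≤ Real.exp (11 * α ^ 4 * n ^ 2 / t) := hE


lemma bmD_singleton (t : ℕ) (p : Fin t → ℝ) (x : Fin t × Bool) :
    bmD t p {x} = ENNReal.ofReal (bmW t p x) := by
  classical
  rw [bmD, discrete_apply _ (measurableSet_singleton x)]
  rw [Finset.sum_eq_single x
    (fun y _ hy => Set.indicator_of_notMem (by simpa using hy) _)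
    (fun h => absurd (Finset.mem_univ x) h)]
  exact Set.indicator_of_mem (Set.mem_singleton x) _


lemma isProb_bmD (t : ℕ) (p : Fin t → ℝ) (hp : ∀ x, 0 ≤ bmW t p x)
    (hs : ∑ x, bmW t p x = 1) : IsProbabilityMeasure (bmD t p) := by
  constructor
  rw [bmD, discrete_apply _ MeasurableSet.univ]
  simp only [Set.indicator_univ]
  rw [← ENNReal.ofReal_sum_of_nonneg (fun x _ => hp x), hs, ENNReal.ofReal_one]


lemma pi_bernMix_apply (t : ℕ) {n : ℕ} (u p : Fin t → ℝ) (hp : ∀ x, 0 ≤ bmW t p x)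
    (hs : ∑ x, bmW t p x = 1) {S : Set (Fin n → ℝ × Bool)} (hS : MeasurableSet S) :
    (Measure.pi fun _ : Fin n => bernMix t u p) S
      = ∑ y : Fin n → Fin t × Bool,
          ((fun (a : Fin n → Fin t × Bool) k => ((u (a k).1, (a k).2) : ℝ × Bool)) ⁻¹' S).indicator
            (fun y => ENNReal.ofReal (∏ k, bmW t p (y k))) y := by
  haveI hPD : IsProbabilityMeasure (bmD t p) := isProb_bmD t p hp hs
  haveI : IsProbabilityMeasure (bernMix t u p) := by
    rw [bernMix_eq_map]
    exact Measure.isProbabilityMeasure_map (measurable_of_countable _).aemeasurable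
  have hmp : MeasurePreserving (fun (a : Fin n → Fin t × Bool) k => ((u (a k).1, (a k).2) : ℝ × Bool))
      (Measure.pi fun _ : Fin n => bmD t p) (Measure.pi fun _ => bernMix t u p) :=
    measurePreserving_pi _ _ (fun _ => ⟨measurable_of_countable _, (bernMix_eq_map t u p).symm⟩)
  rw [← hmp.map_eq, Measure.map_apply hmp.measurable hS, measure_eq_sum]
  refine Finset.sum_congr rfl fun y _ => ?_
  by_cases h : y ∈ (fun (a : Fin n → Fin t × Bool) k => ((u (a k).1, (a k).2) : ℝ × Bool)) ⁻¹' S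
  · rw [Set.indicator_of_mem h, Set.indicator_of_mem h, pi_singleton]
    rw [Finset.prod_congr rfl fun k _ => bmD_singleton t p (y k),
      ← ENNReal.ofReal_prod_of_nonneg (fun k _ => hp (y k))]
  · rw [Set.indicator_of_notMem h, Set.indicator_of_notMem h]


lemma toReal_indicator_sum {Y : Type*} [Fintype Y] (A : Set Y) (f : Y → ℝ) (hf : ∀ y, 0 ≤ f y) :
    (∑ y : Y, A.indicator (fun y => ENNReal.ofReal (f y)) y).toReal
      = ∑ y : Y, A.indicator f y := by
  classical
  have h : ∀ y : Y, A.indicator (fun y => ENNReal.ofReal (f y)) y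
      = ENNReal.ofReal (A.indicator f y) := by
    intro y; by_cases h : y ∈ A <;>
      simp [Set.indicator_of_mem, Set.indicator_of_notMem, h]
  rw [Finset.sum_congr rfl fun y _ => h y,
    ← ENNReal.ofReal_sum_of_nonneg (fun y _ => Set.indicator_nonneg (fun z _ => hf z) y),
    ENNReal.toReal_ofReal (Finset.sum_nonneg fun y _ => Set.indicator_nonneg (fun z _ => hf z) y)]

lemma isProb_bernMix (t : ℕ) (u p : Fin t → ℝ) (hp : ∀ x, 0 ≤ bmW t p x)
    (hs : ∑ x, bmW t p x = 1) : IsProbabilityMeasure (bernMix t u p) := by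
  rw [bernMix_eq_map]
  haveI := isProb_bmD t p hp hs
  exact Measure.isProbabilityMeasure_map (measurable_of_countable _).aemeasurable

end Auxiliary


theorem stmt14 (t n : ℕ) (ht : 0 < t)
    (u : Fin t → ℝ) (hu : ∀ i, u i ∈ Set.Icc (1 / 3 : ℝ) (2 / 3))
    (α : ℝ) (hα : α ∈ Set.Ioo (0 : ℝ) (1 / 3)) :
    tvDist (Measure.pi fun _ : Fin n => bernMix t u u)
        (((2 : ℝ≥0∞) ^ t)⁻¹ •
          ∑ θ : Fin t → Bool,
            Measure.pi fun _ : Fin n =>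
              bernMix t u fun i => u i + (if θ i then (1 : ℝ) else -1) * α) ≤
      (1 / 2) * Real.sqrt (Real.exp (11 * α ^ 4 * n ^ 2 / t) - 1) := by
  classical
  obtain ⟨hα0, hα13⟩ := hα
  have ht0 : (0 : ℝ) < t := by exact_mod_cast ht
  have hu0 : ∀ i, (0 : ℝ) < u i := fun i => lt_of_lt_of_le (by norm_num) (hu i).1
  have hu1 : ∀ i, (0 : ℝ) < 1 - u i := fun i => by have := (hu i).2; linarith
  -- positivity / nonnegativity of weights
  have hwu_pos : ∀ x, 0 < bmW t u x := by
    intro x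
    have h1 : (0 : ℝ) < if x.2 then u x.1 else 1 - u x.1 := by
      cases hx : x.2 <;> simp [hu0 x.1, hu1 x.1]
    rw [bmW]
    exact mul_pos (by positivity) h1
  have hwθ : ∀ (θ : Fin t → Bool) x,
      0 ≤ bmW t (fun i => u i + (if θ i then (1 : ℝ) else -1) * α) x := by
    intro θ x
    rcases x with ⟨i, b⟩
    rcases hu i with ⟨hl, hr⟩
    refine mul_nonneg (by positivity) ?_
    cases b <;> cases h : θ i <;>
      simp only [h, if_true, if_false, Bool.false_eq_true] <;> norm_num <;> linarith
  -- the coordinate map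
  set ψ : (Fin n → Fin t × Bool) → (Fin n → ℝ × Bool) :=
    fun a k => ((u (a k).1, (a k).2) : ℝ × Bool) with hψ
  -- real-valued densities
  set P : (Fin n → Fin t × Bool) → ℝ := fun y => ∏ k, bmW t u (y k) with hP
  set Pθ : (Fin t → Bool) → (Fin n → Fin t × Bool) → ℝ :=
    fun θ y => ∏ k, bmW t (fun i => u i + (if θ i then (1 : ℝ) else -1) * α) (y k) with hPθ
  set Q : (Fin n → Fin t × Bool) → ℝ := fun y => (2 ^ t : ℝ)⁻¹ * ∑ θ, Pθ θ y with hQ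
  have hPpos : ∀ y, 0 < P y := fun y => Finset.prod_pos fun k _ => hwu_pos (y k)
  have hPθ0 : ∀ θ y, 0 ≤ Pθ θ y := fun θ y => Finset.prod_nonneg fun k _ => hwθ θ (y k)
  have hQ0 : ∀ y, 0 ≤ Q y := fun y => mul_nonneg (by positivity)
    (Finset.sum_nonneg fun θ _ => hPθ0 θ y)
  have hP1 : ∑ y, P y = 1 := by
    rw [hP, ← Fintype.sum_pow (fun x => bmW t u x) n, sum_bmW t ht u, one_pow]
  have hcard : (Finset.univ : Finset (Fin t → Bool)).card = 2 ^ t := by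
    simp [Finset.card_univ]
  have hPθ1 : ∀ θ, ∑ y, Pθ θ y = 1 := by
    intro θ
    rw [hPθ, ← Fintype.sum_pow, sum_bmW t ht _, one_pow]
  have hQ1 : ∑ y, Q y = 1 := by
    rw [hQ, ← Finset.mul_sum, Finset.sum_comm,
      Finset.sum_congr rfl fun θ _ => hPθ1 θ, Finset.sum_const, hcard, nsmul_eq_mul, mul_one]
    push_cast
    rw [inv_mul_cancel₀ (by positivity)]
  -- the chi-square bound
  have hchi := chi2_calc t n ht u hu α hα0 hα13
  -- total variation bound for one measurable set
  refine Real.iSup_le (fun Sm => ?_)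
    (mul_nonneg (by norm_num) (Real.sqrt_nonneg _))
  obtain ⟨S, hS⟩ := Sm
  set A : Set (Fin n → Fin t × Bool) := ψ ⁻¹' S with hA
  have hμ : ((Measure.pi fun _ : Fin n => bernMix t u u) S).toReal
      = ∑ y, A.indicator P y := by
    rw [pi_bernMix_apply t u u (fun x => (hwu_pos x).le) (sum_bmW t ht u) hS,
      toReal_indicator_sum _ _ (fun y => (hPpos y).le)]
  have hν : ((((2 : ℝ≥0∞) ^ t)⁻¹ •
        ∑ θ : Fin t → Bool, Measure.pi fun _ : Fin n =>
          bernMix t u fun i => u i + (if θ i then (1 : ℝ) else -1) * α) S).toReal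
      = ∑ y, A.indicator Q y := by
    rw [Measure.smul_apply, Measure.finset_sum_apply, smul_eq_mul, ENNReal.toReal_mul]
    have h1 : ((( 2 : ℝ≥0∞) ^ t)⁻¹).toReal = (2 ^ t : ℝ)⁻¹ := by
      rw [ENNReal.toReal_inv, ENNReal.toReal_pow, ENNReal.toReal_ofNat]
    have h2 : ∀ θ : Fin t → Bool, ((Measure.pi fun _ : Fin n =>
        bernMix t u fun i => u i + (if θ i then (1 : ℝ) else -1) * α) S) ≠ ⊤ := by
      intro θ
      haveI := isProb_bernMix t u (fun i => u i + (if θ i then (1 : ℝ) else -1) * α)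
        (hwθ θ) (sum_bmW t ht _)
      exact measure_ne_top _ S
    rw [h1, ENNReal.toReal_sum (fun θ _ => h2 θ)]
    have h3 : ∀ θ : Fin t → Bool, ((Measure.pi fun _ : Fin n =>
        bernMix t u fun i => u i + (if θ i then (1 : ℝ) else -1) * α) S).toReal
        = ∑ y, A.indicator (Pθ θ) y := by
      intro θ
      rw [pi_bernMix_apply t u _ (hwθ θ) (sum_bmW t ht _) hS,
        toReal_indicator_sum _ _ (fun y => hPθ0 θ y)]
    rw [Finset.sum_congr rfl fun θ _ => h3 θ]
    -- swap and absorb the constant into the indicator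
    rw [Finset.sum_comm, Finset.mul_sum]
    refine Finset.sum_congr rfl fun y _ => ?_
    by_cases h : y ∈ A
    · simp [Set.indicator_of_mem h, hQ]
    · simp [Set.indicator_of_notMem h]
  rw [hμ, hν]
  -- difference of indicator sums
  have hd : ∑ y, A.indicator P y - ∑ y, A.indicator Q y
      = -(∑ y, A.indicator (fun y => Q y - P y) y) := by
    rw [← Finset.sum_sub_distrib, ← Finset.sum_neg_distrib]
    refine Finset.sum_congr rfl fun y _ => ?_
    by_cases h : y ∈ A <;> simp [Set.indicator_apply, h]
  rw [hd, abs_neg]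
  have hzero : ∑ y, (Q y - P y) = 0 := by
    rw [Finset.sum_sub_distrib, hP1, hQ1]; ring
  have hbd := half_l1_bound (fun y => Q y - P y) hzero A
  have hl1 := l1_le_sqrt_chi2 P Q hPpos hP1 hQ1 (B := Real.exp (11 * α ^ 4 * n ^ 2 / t)) hchi
  calc |∑ y, A.indicator (fun y => Q y - P y) y|
      ≤ (1 / 2) * ∑ y, |Q y - P y| := hbd
    _ ≤ (1 / 2) * Real.sqrt (Real.exp (11 * α ^ 4 * n ^ 2 / t) - 1) := by
        have : (0:ℝ) ≤ 1/2 := by norm_num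
        exact mul_le_mul_of_nonneg_left hl1 this

end
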